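/- Index of a Toeplitz-type operator as a difference class: if P and Q are orthogonal projections on a Hilbert space with P - Q compact, then the operator QP : im(P) → im(Q) is Fredholm, and its index equals dim ker(QP|_{im P}) - dim ker(PQ|_{im Q}). -/

import Mathlib

/-- The Toeplitz-type operator `QP : im(P) → im(Q)`. -/
noncomputable def toep {H : Type*} [NormedAddCommGroup H] [InnerProductSpace ℂ H]
    (P Q : H →L[ℂ] H) : (LinearMap.range (P : H →ₗ[ℂ] H)) →L[ℂ] (LinearMap.range (Q : H →ₗ[ℂ] H)) :=
  ContinuousLinearMap.codRestrict (Q.comp (LinearMap.range (P : H →ₗ[ℂ] H)).subtypeL)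
    (LinearMap.range (Q : H →ₗ[ℂ] H)) (fun _ => LinearMap.mem_range_self (Q : H →ₗ[ℂ] H) _)

/-- The index `dim ker - dim coker` of an operator. -/
noncomputable def fredIndex {E F : Type*} [NormedAddCommGroup E] [NormedSpace ℂ E]
    [NormedAddCommGroup F] [NormedSpace ℂ F] (T : E →L[ℂ] F) : ℤ :=
  (Module.finrank ℂ (LinearMap.ker (T : E →ₗ[ℂ] F)) : ℤ) - (Module.finrank ℂ (F ⧸ LinearMap.range (T : E →ₗ[ℂ] F)) : ℤ)


open Metric Filter Topology


/-- If `T` has a left parametrix `S` modulo compacts, then `ker T` is finite dimensional. -/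
lemma finiteDimensional_ker_of_compact_parametrix
    {E F : Type*} [NormedAddCommGroup E] [NormedSpace ℂ E]
    [NormedAddCommGroup F] [NormedSpace ℂ F]
    (T : E →L[ℂ] F) (S : F →L[ℂ] E)
    (hK : IsCompactOperator ⇑(S.comp T - ContinuousLinearMap.id ℂ E)) :
    FiniteDimensional ℂ (LinearMap.ker (T : E →ₗ[ℂ] F)) := by
  set K : E →L[ℂ] E := S.comp T - ContinuousLinearMap.id ℂ E with hKdef
  obtain ⟨M, hMc, hMsub⟩ := hK.image_closedBall_subset_compact 1
  have hball : IsCompact (closedBall (0 : LinearMap.ker (T : E →ₗ[ℂ] F)) 1) := by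
    rw [Topology.IsEmbedding.subtypeVal.isCompact_iff]
    have himg : Subtype.val '' (closedBall (0 : LinearMap.ker (T : E →ₗ[ℂ] F)) 1)
        = (LinearMap.ker (T : E →ₗ[ℂ] F) : Set E) ∩ closedBall (0 : E) 1 := by
      ext x
      constructor
      · rintro ⟨⟨y, hy⟩, hby, rfl⟩
        exact ⟨hy, by simpa [mem_closedBall, dist_eq_norm] using hby⟩
      · rintro ⟨hx, hbx⟩
        exact ⟨⟨x, hx⟩, by simpa [mem_closedBall, dist_eq_norm] using hbx, rfl⟩
    rw [himg]
    refine IsCompact.of_isClosed_subset hMc.neg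
      ((ContinuousLinearMap.isClosed_ker T).inter Metric.isClosed_closedBall) ?_
    rintro x ⟨hx, hbx⟩
    have hxk : T x = 0 := hx
    have hKx : K x = -x := by
      simp [hKdef, ContinuousLinearMap.sub_apply, ContinuousLinearMap.comp_apply, hxk]
    rw [Set.mem_neg]
    have : -x = K x := by rw [hKx]
    rw [this]
    exact hMsub ⟨x, hbx, rfl⟩
  exact FiniteDimensional.of_isCompact_closedBall₀ ℂ one_pos hball


/-- If `T` on a Hilbert space has a left parametrix `S` modulo compacts,
then the range of `T` is closed. -/
lemma isClosed_range_of_compact_parametrix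
    {E F : Type*} [NormedAddCommGroup E] [InnerProductSpace ℂ E] [CompleteSpace E]
    [NormedAddCommGroup F] [NormedSpace ℂ F]
    (T : E →L[ℂ] F) (S : F →L[ℂ] E)
    (hK : IsCompactOperator ⇑(S.comp T - ContinuousLinearMap.id ℂ E))
    (hker : FiniteDimensional ℂ (LinearMap.ker (T : E →ₗ[ℂ] F))) :
    IsClosed (LinearMap.range (T : E →ₗ[ℂ] F) : Set F) := by
  classical
  set K : E →L[ℂ] E := S.comp T - ContinuousLinearMap.id ℂ E with hKdef
  set N : Submodule ℂ E := LinearMap.ker (T : E →ₗ[ℂ] F) with hN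
  haveI : FiniteDimensional ℂ N := hker
  haveI : CompleteSpace N := FiniteDimensional.complete ℂ N
  set M : Submodule ℂ E := Nᗮ with hM
  have hcompl : IsCompl N M := Submodule.isCompl_orthogonal_of_hasOrthogonalProjection
  -- T is bounded below on M
  have hbdd : ∃ c : ℝ, 0 < c ∧ ∀ x ∈ M, c * ‖x‖ ≤ ‖T x‖ := by
    by_contra h
    push_neg at h
    have hsel : ∀ n : ℕ, ∃ u : E, u ∈ M ∧ ‖u‖ = 1 ∧ ‖T u‖ < 1 / (n + 1) := by
      intro n
      obtain ⟨x, hxM, hx⟩ := h (1 / (n + 1)) (by positivity)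
      have hx0 : x ≠ 0 := by
        rintro rfl
        simp at hx
      refine ⟨‖x‖⁻¹ • x, M.smul_mem _ hxM, norm_smul_inv_norm hx0, ?_⟩
      have hxn : (0:ℝ) < ‖x‖ := norm_pos_iff.mpr hx0
      rw [T.map_smul_of_tower, norm_smul]
      simp only [norm_inv, norm_norm]
      calc ‖x‖⁻¹ * ‖T x‖ < ‖x‖⁻¹ * (1 / (n + 1) * ‖x‖) := by
            exact mul_lt_mul_of_pos_left hx (by positivity)
        _ = 1 / (n + 1) := by field_simp
    choose u huM hu1 huT using hsel
    obtain ⟨M₀, hM₀c, hM₀sub⟩ := hK.image_closedBall_subset_compact 1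
    have humem : ∀ n, K (u n) ∈ M₀ := fun n =>
      hM₀sub ⟨u n, by simp [mem_closedBall, dist_eq_norm, hu1 n], rfl⟩
    obtain ⟨y, _, φ, hφ, hconv⟩ := hM₀c.tendsto_subseq humem
    have hTu : Tendsto (fun n => T (u n)) atTop (𝓝 0) := by
      rw [tendsto_zero_iff_norm_tendsto_zero]
      refine squeeze_zero (fun n => norm_nonneg _) (fun n => (huT n).le) ?_
      exact tendsto_one_div_add_atTop_nhds_zero_nat
    have hSTu : Tendsto (fun n => S (T (u n))) atTop (𝓝 0) := by
      have := (S.continuous.tendsto 0).comp hTu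
      rw [map_zero] at this
      exact this
    have huconv : Tendsto (fun k => u (φ k)) atTop (𝓝 (-y)) := by
      have h1 : Tendsto (fun k => S (T (u (φ k))) - K (u (φ k))) atTop (𝓝 (0 - y)) :=
        (hSTu.comp hφ.tendsto_atTop).sub hconv
      have h2 : ∀ k, S (T (u (φ k))) - K (u (φ k)) = u (φ k) := by
        intro k
        simp [hKdef, ContinuousLinearMap.sub_apply, ContinuousLinearMap.comp_apply]
      simpa [h2, zero_sub] using h1
    have hynorm : ‖-y‖ = 1 := by
      have h1 : Tendsto (fun k => ‖u (φ k)‖) atTop (𝓝 ‖-y‖) :=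
        (continuous_norm.tendsto (-y)).comp huconv
      have h2 : Tendsto (fun k => ‖u (φ k)‖) atTop (𝓝 1) := by
        simpa [hu1] using (tendsto_const_nhds : Tendsto (fun _ : ℕ => (1:ℝ)) atTop (𝓝 1))
      exact tendsto_nhds_unique h1 h2
    have hyM : -y ∈ M := by
      have hMcl : IsClosed (M : Set E) := Submodule.isClosed_orthogonal N
      exact hMcl.mem_of_tendsto huconv (Filter.Eventually.of_forall fun k => huM (φ k))
    have hyN : -y ∈ N := by
      have h1 : Tendsto (fun k => T (u (φ k))) atTop (𝓝 (T (-y))) :=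
        (T.continuous.tendsto (-y)).comp huconv
      have h2 : Tendsto (fun k => T (u (φ k))) atTop (𝓝 0) := hTu.comp hφ.tendsto_atTop
      exact LinearMap.mem_ker.mpr (tendsto_nhds_unique h1 h2)
    have hy0 : -y = 0 :=
      (Submodule.disjoint_def.mp (Submodule.orthogonal_disjoint N)) _ hyN hyM
    rw [hy0, norm_zero] at hynorm
    exact one_ne_zero hynorm.symm
  obtain ⟨c, hc0, hbound⟩ := hbdd
  set T₁ : M →L[ℂ] F := T.comp M.subtypeL with hT₁
  have hanti : AntilipschitzWith ⟨c⁻¹, inv_nonneg.mpr hc0.le⟩ T₁ := by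
    refine ContinuousLinearMap.antilipschitz_of_bound T₁ fun x => ?_
    show ‖(x : E)‖ ≤ c⁻¹ * ‖T (x : E)‖
    rw [le_inv_mul_iff₀ hc0]
    exact hbound x x.2
  haveI : CompleteSpace M := (Submodule.isClosed_orthogonal N).completeSpace_coe
  have hclosed₁ : IsClosed (Set.range T₁) :=
    hanti.isClosed_range T₁.uniformContinuous
  have heq : (LinearMap.range (T : E →ₗ[ℂ] F) : Set F) = Set.range T₁ := by
    ext z
    constructor
    · rintro ⟨x, rfl⟩
      have hx : x ∈ N ⊔ M := by rw [hcompl.sup_eq_top]; trivial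
      obtain ⟨a, ha, b, hb, rfl⟩ := Submodule.mem_sup.mp hx
      refine ⟨⟨b, hb⟩, ?_⟩
      have haz : T a = 0 := ha
      simp [hT₁, ContinuousLinearMap.comp_apply, map_add, haz]
    · rintro ⟨x, rfl⟩
      exact ⟨x.1, rfl⟩
  rw [heq]
  exact hclosed₁

section helpers

variable {H : Type*} [NormedAddCommGroup H] [InnerProductSpace ℂ H] [CompleteSpace H]

set_option linter.unusedSectionVars false

lemma idem_fix (P : H →L[ℂ] H) (hP : IsIdempotentElem P) :
    ∀ x ∈ LinearMap.range (P : H →ₗ[ℂ] H), P x = x := by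
  rintro _ ⟨y, rfl⟩
  have := ContinuousLinearMap.ext_iff.mp hP y
  simpa [ContinuousLinearMap.mul_apply] using this

lemma idem_range_closed (P : H →L[ℂ] H) (hP : IsIdempotentElem P) :
    IsClosed ((LinearMap.range (P : H →ₗ[ℂ] H) : Submodule ℂ H) : Set H) := by
  have heq : (LinearMap.range (P : H →ₗ[ℂ] H) : Submodule ℂ H)
      = LinearMap.ker ((P - ContinuousLinearMap.id ℂ H : H →L[ℂ] H) : H →ₗ[ℂ] H) := by
    ext x
    simp only [LinearMap.mem_ker, ContinuousLinearMap.coe_coe, ContinuousLinearMap.coe_sub', Pi.sub_apply,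
      ContinuousLinearMap.coe_id', id_eq, sub_eq_zero]
    constructor
    · intro hx; exact idem_fix P hP x hx
    · intro hx; exact ⟨x, hx⟩
  rw [heq]
  exact ContinuousLinearMap.isClosed_ker _

/-- compactness of the defect `S∘T - 1` on `range P`. -/
lemma toep_defect_compact (P Q : H →L[ℂ] H) (hP : IsIdempotentElem P)
    (hc : IsCompactOperator ⇑(P - Q)) :
    IsCompactOperator
      ⇑((toep Q P).comp (toep P Q) - ContinuousLinearMap.id ℂ (LinearMap.range (P : H →ₗ[ℂ] H))) := by
  have h1 : IsCompactOperator (⇑P ∘ ⇑(P - Q)) := hc.clm_comp P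
  have h2 : IsCompactOperator (-(⇑P ∘ ⇑(P - Q))) := h1.neg
  have h3 : IsCompactOperator ((-(⇑P ∘ ⇑(P - Q))) ∘ ⇑(LinearMap.range (P : H →ₗ[ℂ] H)).subtypeL) :=
    h2.comp_clm _
  have hV : ∀ x : LinearMap.range (P : H →ₗ[ℂ] H),
      ((-(⇑P ∘ ⇑(P - Q))) ∘ ⇑(LinearMap.range (P : H →ₗ[ℂ] H)).subtypeL) x ∈ LinearMap.range (P : H →ₗ[ℂ] H) := by
    intro x
    exact Submodule.neg_mem _ (LinearMap.mem_range_self (P : H →ₗ[ℂ] H) _)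
  have h4 := h3.codRestrict hV (idem_range_closed P hP)
  have heq : ⇑((toep Q P).comp (toep P Q) - ContinuousLinearMap.id ℂ (LinearMap.range (P : H →ₗ[ℂ] H)))
      = Set.codRestrict _ _ hV := by
    funext x
    apply Subtype.ext
    have hx : P (x : H) = x := idem_fix P hP _ x.2
    show P (Q (x : H)) - (x : H) = -(P ((P - Q) (x : H)))
    simp [map_sub, hx, neg_sub]
  rw [heq]
  exact h4

end helpers

/-- if `P`, `Q` are orthogonal projections on a Hilbert space with `P - Q`
compact, then `QP : im(P) → im(Q)` is Fredholm (finite-dimensional kernel and cokernel,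
closed range), and its index equals `dim ker(QP|_{im P}) - dim ker(PQ|_{im Q})`. -/
theorem toeplitz_fredholm_of_compact_difference {H : Type*} [NormedAddCommGroup H]
    [InnerProductSpace ℂ H] [CompleteSpace H] (P Q : H →L[ℂ] H)
    (hP : IsIdempotentElem P) (hQ : IsIdempotentElem Q)
    (hPsa : IsSelfAdjoint P) (hQsa : IsSelfAdjoint Q)
    (hc : IsCompactOperator ⇑(P - Q)) :
    FiniteDimensional ℂ (LinearMap.ker (toep P Q : LinearMap.range (P : H →ₗ[ℂ] H) →ₗ[ℂ] LinearMap.range (Q : H →ₗ[ℂ] H))) ∧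
    FiniteDimensional ℂ ((LinearMap.range (Q : H →ₗ[ℂ] H)) ⧸ LinearMap.range (toep P Q : LinearMap.range (P : H →ₗ[ℂ] H) →ₗ[ℂ] LinearMap.range (Q : H →ₗ[ℂ] H))) ∧
    IsClosed (LinearMap.range (toep P Q : LinearMap.range (P : H →ₗ[ℂ] H) →ₗ[ℂ] LinearMap.range (Q : H →ₗ[ℂ] H)) : Set (LinearMap.range (Q : H →ₗ[ℂ] H))) ∧
    fredIndex (toep P Q) =
      (Module.finrank ℂ (LinearMap.ker (toep P Q : LinearMap.range (P : H →ₗ[ℂ] H) →ₗ[ℂ] LinearMap.range (Q : H →ₗ[ℂ] H))) : ℤ) -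
        (Module.finrank ℂ (LinearMap.ker (toep Q P : LinearMap.range (Q : H →ₗ[ℂ] H) →ₗ[ℂ] LinearMap.range (P : H →ₗ[ℂ] H))) : ℤ) := by
  classical
  have hc' : IsCompactOperator ⇑(Q - P) := by
    have := hc.neg
    have hfun : (-⇑(P - Q)) = ⇑(Q - P) := by
      funext x; simp
    rwa [hfun] at this
  haveI hcP : CompleteSpace (LinearMap.range (P : H →ₗ[ℂ] H)) := (idem_range_closed P hP).completeSpace_coe
  haveI hcQ : CompleteSpace (LinearMap.range (Q : H →ₗ[ℂ] H)) := (idem_range_closed Q hQ).completeSpace_coe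
  have hKP := toep_defect_compact P Q hP hc
  have hKQ := toep_defect_compact Q P hQ hc'
  have hkerT : FiniteDimensional ℂ (LinearMap.ker (toep P Q : LinearMap.range (P : H →ₗ[ℂ] H) →ₗ[ℂ] LinearMap.range (Q : H →ₗ[ℂ] H))) :=
    finiteDimensional_ker_of_compact_parametrix (toep P Q) (toep Q P) hKP
  have hkerS : FiniteDimensional ℂ (LinearMap.ker (toep Q P : LinearMap.range (Q : H →ₗ[ℂ] H) →ₗ[ℂ] LinearMap.range (P : H →ₗ[ℂ] H))) :=
    finiteDimensional_ker_of_compact_parametrix (toep Q P) (toep P Q) hKQ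
  have hclosed : IsClosed (LinearMap.range (toep P Q : LinearMap.range (P : H →ₗ[ℂ] H) →ₗ[ℂ] LinearMap.range (Q : H →ₗ[ℂ] H)) : Set (LinearMap.range (Q : H →ₗ[ℂ] H))) :=
    isClosed_range_of_compact_parametrix (toep P Q) (toep Q P) hKP hkerT
  set R : Submodule ℂ (LinearMap.range (Q : H →ₗ[ℂ] H)) := LinearMap.range (toep P Q : LinearMap.range (P : H →ₗ[ℂ] H) →ₗ[ℂ] LinearMap.range (Q : H →ₗ[ℂ] H)) with hR
  haveI : CompleteSpace R := hclosed.completeSpace_coe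
  have hcompl : IsCompl R Rᗮ := Submodule.isCompl_orthogonal_of_hasOrthogonalProjection
  have e : ((LinearMap.range (Q : H →ₗ[ℂ] H)) ⧸ R) ≃ₗ[ℂ] Rᗮ := Submodule.quotientEquivOfIsCompl R Rᗮ hcompl
  -- the key inner-product identity
  have hinner : ∀ (x : LinearMap.range (P : H →ₗ[ℂ] H)) (y : LinearMap.range (Q : H →ₗ[ℂ] H)),
      (inner ℂ ((toep P Q) x) y : ℂ) = inner ℂ x ((toep Q P) y) := by
    intro x y
    have hx : P (x : H) = x := idem_fix P hP _ x.2
    have hy : Q (y : H) = y := idem_fix Q hQ _ y.2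
    show (inner ℂ (Q (x : H)) (y : H) : ℂ) = inner ℂ (x : H) (P (y : H))
    have hq := hQsa.isSymmetric (x : H) (y : H)
    have hp := hPsa.isSymmetric (x : H) (y : H)
    simp only [ContinuousLinearMap.coe_coe] at hq hp
    rw [hq, hy, ← hp, hx]
  have horth : Rᗮ = LinearMap.ker (toep Q P : LinearMap.range (Q : H →ₗ[ℂ] H) →ₗ[ℂ] LinearMap.range (P : H →ₗ[ℂ] H)) := by
    ext y
    rw [Submodule.mem_orthogonal, LinearMap.mem_ker]
    constructor
    · intro hy
      have h1 : (inner ℂ ((toep Q P) y) ((toep Q P) y) : ℂ) = 0 := by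
        have h2 := hy ((toep P Q) ((toep Q P) y)) ⟨_, rfl⟩
        rwa [hinner] at h2
      exact inner_self_eq_zero.mp h1
    · rintro hy u ⟨x, rfl⟩
      rw [ContinuousLinearMap.coe_coe] at hy ⊢
      rw [hinner, hy, inner_zero_right]
  have hfinOrth : FiniteDimensional ℂ Rᗮ := by rw [horth]; exact hkerS
  have hquot : FiniteDimensional ℂ ((LinearMap.range (Q : H →ₗ[ℂ] H)) ⧸ R) :=
    Module.Finite.equiv e.symm
  have hrank : Module.finrank ℂ ((LinearMap.range (Q : H →ₗ[ℂ] H)) ⧸ R)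
      = Module.finrank ℂ (LinearMap.ker (toep Q P : LinearMap.range (Q : H →ₗ[ℂ] H) →ₗ[ℂ] LinearMap.range (P : H →ₗ[ℂ] H))) := by
    rw [e.finrank_eq]
    exact (LinearEquiv.ofEq _ _ horth).finrank_eq
  refine ⟨hkerT, hquot, hclosed, ?_⟩
  unfold fredIndex
  rw [hrank]
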